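/- For all positive integers n and m, 2 · Σ_{l=0}^{n-1} (-1)^l l^m = (-1)^{n+1} · Σ_{l=0}^{m-1} C(m,l) E_l n^{m-l} + ((-1)^{n+1} + 1) · E_m, an identity of rational numbers. -/

import Mathlib

/-- The Euler numbers `E₀ = 1`, `∑_{k=0}^{n} C(n,k) Eₖ + Eₙ = 0` for `n ≥ 1`. -/
noncomputable def eulerNumber : ℕ → ℚ
  | 0 => 1
  | n + 1 => (-1/2) * ∑ k ∈ (Finset.range (n+1)).attach,
      ((n+1).choose k.1 : ℚ) * eulerNumber k.1
  decreasing_by exact Finset.mem_range.mp k.2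

lemma choose_swap (m l j : ℕ) :
    m.choose l * (m - l).choose j = m.choose j * (m - j).choose l := by
  rcases le_or_gt l m with hl | hl
  · rcases le_or_gt j m with hj | hj
    · rcases le_or_gt (l + j) m with h | h
      · have hjl : j ≤ m - l := Nat.le_sub_of_add_le (by omega)
        have hlj : l ≤ m - j := Nat.le_sub_of_add_le (by omega)
        rw [← Nat.choose_symm hl, Nat.choose_mul hjl,
          show m - l - j = (m - j) - l by omega, Nat.choose_symm hlj]
      · have h1 : (m - l).choose j = 0 := Nat.choose_eq_zero_of_lt (by omega)
        have h2 : (m - j).choose l = 0 := Nat.choose_eq_zero_of_lt (by omega)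
        simp [h1, h2]
    · have h1 : m.choose j = 0 := Nat.choose_eq_zero_of_lt hj
      have h2 : (m - l).choose j = 0 := Nat.choose_eq_zero_of_lt (by omega)
      simp [h1, h2]
  · have h1 : m.choose l = 0 := Nat.choose_eq_zero_of_lt hl
    have h2 : (m - j).choose l = 0 := Nat.choose_eq_zero_of_lt (by omega)
    simp [h1, h2]

lemma euler_rec (k : ℕ) (hk : 0 < k) :
    ∑ l ∈ Finset.range k, (k.choose l : ℚ) * eulerNumber l = -2 * eulerNumber k := by
  obtain ⟨j, rfl⟩ := Nat.exists_eq_add_of_lt hk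
  rw [zero_add]
  rw [show eulerNumber (j+1) = (-1/2) * ∑ k ∈ (Finset.range (j+1)).attach,
      ((j+1).choose k.1 : ℚ) * eulerNumber k.1 from by rw [eulerNumber],
    Finset.sum_attach (Finset.range (j+1)) (fun l => ((j+1).choose l : ℚ) * eulerNumber l)]
  ring

lemma euler_poly (m : ℕ) (x : ℚ) :
    ∑ l ∈ Finset.range (m + 1), (m.choose l : ℚ) * eulerNumber l *
      ((x + 1) ^ (m - l) + x ^ (m - l)) = 2 * x ^ m := by
  have expand : ∀ l, (x + 1) ^ (m - l) =
      ∑ j ∈ Finset.range (m + 1), ((m - l).choose j : ℚ) * x ^ j := by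
    intro l
    have hext : ∑ j ∈ Finset.range (m - l + 1), ((m - l).choose j : ℚ) * x ^ j
        = ∑ j ∈ Finset.range (m + 1), ((m - l).choose j : ℚ) * x ^ j := by
      refine Finset.sum_subset (Finset.range_subset_range.2 (by omega)) fun j _ hj => ?_
      simp only [Finset.mem_range] at hj
      rw [Nat.choose_eq_zero_of_lt (by omega)]
      simp
    rw [add_pow, ← hext]
    exact Finset.sum_congr rfl fun j _ => by ring
  simp_rw [mul_add, expand, Finset.mul_sum, Finset.sum_add_distrib]
  rw [Finset.sum_comm]
  have key1 : ∀ j ∈ Finset.range (m + 1),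
      ∑ l ∈ Finset.range (m + 1), (m.choose l : ℚ) * eulerNumber l *
        (((m - l).choose j : ℚ) * x ^ j)
      = (if j = m then (1:ℚ) else -(m.choose j : ℚ) * eulerNumber (m - j)) * x ^ j := by
    intro j hj
    simp only [Finset.mem_range] at hj
    have : ∀ l ∈ Finset.range (m + 1),
        (m.choose l : ℚ) * eulerNumber l * (((m - l).choose j : ℚ) * x ^ j)
        = (m.choose j : ℚ) * (((m - j).choose l : ℚ) * eulerNumber l) * x ^ j := by
      intro l _
      have := choose_swap m l j
      have : (m.choose l : ℚ) * ((m - l).choose j : ℚ) =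
          (m.choose j : ℚ) * ((m - j).choose l : ℚ) := by exact_mod_cast congrArg Nat.cast this
      linear_combination (eulerNumber l * x ^ j) * this
    rw [Finset.sum_congr rfl this]
    simp_rw [← Finset.sum_mul, ← Finset.mul_sum]
    rcases eq_or_lt_of_le (Nat.lt_succ_iff.mp hj) with rfl | hjm
    · rw [if_pos rfl, Nat.choose_self, Nat.cast_one, one_mul, Nat.sub_self]
      have h1 : ∑ l ∈ Finset.range (j + 1), ((Nat.choose 0 l : ℕ) : ℚ) * eulerNumber l = 1 := by
        rw [Finset.sum_eq_single 0]
        · simp [eulerNumber]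
        · intro b _ hb
          rw [Nat.choose_eq_zero_of_lt (by omega)]
          simp
        · intro h; exact absurd (Finset.mem_range.2 (by omega)) h
      rw [h1, one_mul]
    · rw [if_neg (by omega)]
      have hms : m - j = (m - j - 1) + 1 := by omega
      have hsub : Finset.range (m - j + 1) ⊆ Finset.range (m + 1) :=
        Finset.range_subset_range.2 (by omega)
      have : ∑ l ∈ Finset.range (m + 1), ((m - j).choose l : ℚ) * eulerNumber l
          = ∑ l ∈ Finset.range (m - j + 1), ((m - j).choose l : ℚ) * eulerNumber l := by
        refine (Finset.sum_subset hsub fun l _ hl => ?_).symm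
        simp only [Finset.mem_range] at hl
        rw [Nat.choose_eq_zero_of_lt (by omega)]
        simp
      rw [this, Finset.sum_range_succ, euler_rec (m - j) (by omega),
        Nat.choose_self, Nat.cast_one, one_mul]
      ring
  rw [Finset.sum_congr rfl key1]
  have key2 : ∑ l ∈ Finset.range (m + 1), (m.choose l : ℚ) * eulerNumber l * x ^ (m - l)
      = ∑ j ∈ Finset.range (m + 1), (m.choose j : ℚ) * eulerNumber (m - j) * x ^ j := by
    rw [Finset.sum_bij' (fun l _ => m - l) (fun j _ => m - j)]
    · intro a ha; simp at ha ⊢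
    · intro a ha; simp at ha ⊢
    · intro a ha; simp at ha; omega
    · intro a ha; simp at ha; omega
    · intro a ha; simp at ha
      rw [Nat.choose_symm (by omega), Nat.sub_sub_self (by omega)]
  rw [key2, ← Finset.sum_add_distrib]
  rw [Finset.sum_congr rfl (g := fun j => if j = m then 2 * x ^ m else 0)]
  · simp
  · intro j hj
    simp only [Finset.mem_range] at hj
    split_ifs with h
    · subst h; simp [eulerNumber]; ring
    · ring

/-- For positive integers `n, m`,
`2 ∑_{l=0}^{n-1} (-1)^l l^m
  = (-1)^{n+1} ∑_{l=0}^{m-1} C(m,l) E_l n^{m-l} + ((-1)^{n+1} + 1) E_m`. -/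
theorem alternating_sum_powers (n m : ℕ) (hn : 0 < n) (hm : 0 < m) :
    2 * ∑ l ∈ Finset.range n, (-1 : ℚ) ^ l * (l : ℚ) ^ m =
      (-1 : ℚ) ^ (n + 1) *
        ∑ l ∈ Finset.range m, (m.choose l : ℚ) * eulerNumber l * (n : ℚ) ^ (m - l) +
      ((-1 : ℚ) ^ (n + 1) + 1) * eulerNumber m := by
  induction n, hn using Nat.le_induction with
  | base =>
    rw [Finset.sum_range_one]
    have h1 : ∑ l ∈ Finset.range m, (m.choose l : ℚ) * eulerNumber l * ((1:ℕ) : ℚ) ^ (m - l)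
        = -2 * eulerNumber m := by
      rw [← euler_rec m hm]
      exact Finset.sum_congr rfl fun l _ => by norm_num
    rw [h1]
    norm_num [zero_pow hm.ne']
  | succ n hn ih =>
    rw [Finset.sum_range_succ, mul_add, ih]
    have hp := euler_poly m (n : ℚ)
    rw [Finset.sum_range_succ] at hp
    simp only [Nat.choose_self, Nat.cast_one, one_mul, Nat.sub_self, pow_zero] at hp
    simp_rw [mul_add] at hp
    rw [Finset.sum_add_distrib] at hp
    push_cast
    simp only [pow_succ]
    linear_combination (-(1:ℚ)) * (-1:ℚ)^n * hp
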